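/- arXiv:2312.03274 — 2 statements merged into one kernel-verified Lean document; each statement's English description precedes it below -/
import Mathlib

section
/- Let X be N-by-P, K ≤ min(N,P), and let P_k be arbitrary penalty functions on ℝ^P. If (Ẑ, L̂) minimizes (1/2)||X - Z L^T||_F^2 + Σ_k P_k(l_k) over Z with orthonormal columns and L ∈ ℝ^{P×K}, then L̂ minimizes (1/2) d_*(X^T X, L L^T)^2 + Σ_k P_k(l_k) over L ∈ ℝ^{P×K}, where d_* is the Bures-Wasserstein distance. -/
open Matrix

noncomputable def frobSq {n p : ℕ} (A : Matrix (Fin n) (Fin p) ℝ) : ℝ := ∑ i, ∑ j, (A i j)^2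

open Classical in
/-- The unique positive semidefinite square root of a PSD matrix (junk value `0` otherwise). -/
noncomputable def msqrt {p : ℕ} (M : Matrix (Fin p) (Fin p) ℝ) : Matrix (Fin p) (Fin p) ℝ :=
  if h : M.PosSemidef then
    h.1.eigenvectorUnitary.1 * diagonal ((↑) ∘ (√·) ∘ h.1.eigenvalues) *
      (star h.1.eigenvectorUnitary : Matrix (Fin p) (Fin p) ℝ) else 0

/-- Squared Bures-Wasserstein distance. -/
noncomputable def BWsq {p : ℕ} (A B : Matrix (Fin p) (Fin p) ℝ) : ℝ :=
  A.trace - 2 * (msqrt (msqrt A * B * msqrt A)).trace + B.trace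

lemma psd_tmul {n k : ℕ} (M : Matrix (Fin n) (Fin k) ℝ) : (Mᵀ * M).PosSemidef := by
  simpa [conjTranspose_eq_transpose_of_trivial] using posSemidef_conjTranspose_mul_self M

lemma psd_mult {n k : ℕ} (M : Matrix (Fin n) (Fin k) ℝ) : (M * Mᵀ).PosSemidef := by
  simpa [conjTranspose_eq_transpose_of_trivial] using posSemidef_self_mul_conjTranspose M

open scoped MatrixOrder in
lemma msqrt_of_psd {p : ℕ} {M : Matrix (Fin p) (Fin p) ℝ} (h : M.PosSemidef) :
    msqrt M = CFC.sqrt M := by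
  rw [msqrt, dif_pos h, CFC.sqrt_eq_cfc, cfc_nnreal_eq_real _ M h.nonneg, h.1.cfc_eq,
    IsHermitian.cfc, Unitary.conjStarAlgAut_apply]
  congr 3
  funext i
  simp [h.eigenvalues_nonneg i]

lemma transpose_eq_self_of_psd {p : ℕ} {M : Matrix (Fin p) (Fin p) ℝ} (h : M.PosSemidef) :
    Mᵀ = M := by
  have := h.1
  rwa [IsHermitian, conjTranspose_eq_transpose_of_trivial] at this

open scoped MatrixOrder in
lemma msqrt_psd {p : ℕ} {M : Matrix (Fin p) (Fin p) ℝ} (h : M.PosSemidef) :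
    (msqrt M).PosSemidef := by
  rw [msqrt_of_psd h]; exact nonneg_iff_posSemidef.mp (CFC.sqrt_nonneg M)

open scoped MatrixOrder in
lemma msqrt_mul_self {p : ℕ} {M : Matrix (Fin p) (Fin p) ℝ} (h : M.PosSemidef) :
    msqrt M * msqrt M = M := by rw [msqrt_of_psd h]; exact CFC.sqrt_mul_sqrt_self M h.nonneg

lemma polar {n k : ℕ} (hk : k ≤ n) (M : Matrix (Fin n) (Fin k) ℝ) :
    ∃ W : Matrix (Fin n) (Fin k) ℝ, Wᵀ * W = 1 ∧ M = W * msqrt (Mᵀ * M) := by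
  classical
  set G : Matrix (Fin k) (Fin k) ℝ := Mᵀ * M with hGdef
  have hG : G.PosSemidef := psd_tmul M
  set U : Matrix (Fin k) (Fin k) ℝ := (hG.1.eigenvectorUnitary : Matrix (Fin k) (Fin k) ℝ)
    with hUdef
  set d : Fin k → ℝ := hG.1.eigenvalues with hddef
  have hdnn : ∀ j, 0 ≤ d j := fun j => hG.eigenvalues_nonneg j
  have hUtU : Uᵀ * U = 1 := by
    have := mem_unitaryGroup_iff'.mp hG.1.eigenvectorUnitary.2
    simpa [hUdef, star_eq_conjTranspose, conjTranspose_eq_transpose_of_trivial] using this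
  have hUUt : U * Uᵀ = 1 := by
    have := mem_unitaryGroup_iff.mp hG.1.eigenvectorUnitary.2
    simpa [hUdef, star_eq_conjTranspose, conjTranspose_eq_transpose_of_trivial] using this
  have hdiag : Uᵀ * G * U = diagonal d := by
    have h := hG.1.conjStarAlgAut_star_eigenvectorUnitary
    rw [Unitary.conjStarAlgAut_star_apply] at h
    simp only [star_eq_conjTranspose, conjTranspose_eq_transpose_of_trivial,
      RCLike.ofReal_real_eq_id] at h
    exact h
  have hsq : msqrt G = U * diagonal (fun i => Real.sqrt (d i)) * Uᵀ := by
    rw [msqrt, dif_pos hG]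
    simp only [star_eq_conjTranspose, conjTranspose_eq_transpose_of_trivial,
      RCLike.ofReal_real_eq_id]
    rfl
  have hgram : ∀ j j', (∑ i, (M * U) i j * (M * U) i j') = diagonal d j j' := by
    intro j j'
    have h1 : (M * U)ᵀ * (M * U) = Uᵀ * G * U := by
      rw [transpose_mul, hGdef]
      simp only [Matrix.mul_assoc]
    have h2 := congrFun (congrFun (h1.trans hdiag) j) j'
    rw [← h2, mul_apply]
    simp [transpose_apply]
  -- the normalized columns
  set v' : Fin n → EuclideanSpace ℝ (Fin n) := fun i =>
    if h : (i : ℕ) < k then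
      (WithLp.equiv 2 (Fin n → ℝ)).symm
        (fun r => (Real.sqrt (d ⟨i, h⟩))⁻¹ * (M * U) r ⟨i, h⟩)
    else 0 with hv'def
  set s : Set (Fin n) := {i | ∃ h : (i : ℕ) < k, d ⟨i, h⟩ ≠ 0} with hsdef
  have horth : Orthonormal ℝ (s.restrict v') := by
    rw [orthonormal_iff_ite]
    rintro ⟨i, hik, hdi⟩ ⟨j, hjk, hdj⟩
    have hinner : ∀ (x y : Fin n → ℝ),
        inner ℝ ((WithLp.equiv 2 (Fin n → ℝ)).symm x) ((WithLp.equiv 2 (Fin n → ℝ)).symm y)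
          = ∑ r, x r * y r := by
      intro x y
      simp [PiLp.inner_apply, RCLike.inner_apply, mul_comm]
    show inner ℝ (v' i) (v' j) = _
    simp only [Set.restrict_apply, hv'def, dif_pos hik, dif_pos hjk, hinner]
    have hsum : ∑ r, ((Real.sqrt (d ⟨i, hik⟩))⁻¹ * (M * U) r ⟨i, hik⟩) *
        ((Real.sqrt (d ⟨j, hjk⟩))⁻¹ * (M * U) r ⟨j, hjk⟩)
        = (Real.sqrt (d ⟨i, hik⟩))⁻¹ * (Real.sqrt (d ⟨j, hjk⟩))⁻¹ *
          diagonal d ⟨i, hik⟩ ⟨j, hjk⟩ := by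
      rw [← hgram, Finset.mul_sum]
      congr 1; ext r; ring
    rw [hsum]
    by_cases hij : i = j
    · subst hij
      obtain rfl : hjk = hik := rfl
      have h0 : 0 < d ⟨i, hjk⟩ := lt_of_le_of_ne (hdnn _) (Ne.symm hdi)
      have hss : Real.sqrt (d ⟨i, hjk⟩) * Real.sqrt (d ⟨i, hjk⟩) = d ⟨i, hjk⟩ :=
        Real.mul_self_sqrt (hdnn _)
      rw [diagonal_apply_eq, if_pos rfl, ← mul_inv, hss, inv_mul_cancel₀ (ne_of_gt h0)]
    · have hne : (⟨i, hik⟩ : Fin k) ≠ ⟨j, hjk⟩ := by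
        intro h
        have hv : (i : ℕ) = (j : ℕ) := congrArg (Fin.val (n := k)) h
        exact hij (Fin.val_injective hv)
      rw [diagonal_apply_ne _ hne, mul_zero]
      have hsne : (⟨i, ⟨hik, hdi⟩⟩ : ↥s) ≠ ⟨j, ⟨hjk, hdj⟩⟩ := by
        intro h
        exact hij (congrArg Subtype.val h)
      rw [if_neg hsne]
  have hcard : Module.finrank ℝ (EuclideanSpace ℝ (Fin n)) = Fintype.card (Fin n) := by
    simp [finrank_euclideanSpace]
  obtain ⟨b, hb⟩ := horth.exists_orthonormalBasis_extension_of_card_eq hcard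
  set C : Matrix (Fin n) (Fin k) ℝ := Matrix.of (fun i j => b (Fin.castLE hk j) i) with hCdef
  have hbo := orthonormal_iff_ite.mp b.orthonormal
  have hCC : Cᵀ * C = 1 := by
    ext j j'
    rw [mul_apply, one_apply]
    have : inner ℝ (b (Fin.castLE hk j)) (b (Fin.castLE hk j'))
        = ∑ i, b (Fin.castLE hk j) i * b (Fin.castLE hk j') i := by
      simp [PiLp.inner_apply, RCLike.inner_apply, mul_comm]
    have h2 := (hbo (Fin.castLE hk j) (Fin.castLE hk j')).symm.trans this
    simp only [hCdef, of_apply, transpose_apply]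
    rw [← h2]
    simp [Fin.castLE_inj]
  have hkey : ∀ i j, (M * U) i j = Real.sqrt (d j) * C i j := by
    intro i j
    by_cases hdj : d j = 0
    · have hz : ∑ r, (M * U) r j * (M * U) r j = 0 := by
        rw [hgram]; simp [hdj]
      have hz2 : (M * U) i j = 0 := by
        have := (Finset.sum_eq_zero_iff_of_nonneg
          (fun r _ => mul_self_nonneg ((M * U) r j))).mp hz i (Finset.mem_univ i)
        exact mul_self_eq_zero.mp this
      rw [hz2, hdj, Real.sqrt_zero, zero_mul]
    · have h1 : ((Fin.castLE hk j : Fin n) : ℕ) < k := by simpa using j.isLt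
      have h2 : (⟨((Fin.castLE hk j : Fin n) : ℕ), h1⟩ : Fin k) = j := by
        ext; simp
      have hmem : (Fin.castLE hk j : Fin n) ∈ s := ⟨h1, by rw [h2]; exact hdj⟩
      have hbj := hb _ hmem
      have hCij : C i j = (Real.sqrt (d j))⁻¹ * (M * U) i j := by
        have happ : b (Fin.castLE hk j) i
            = ((WithLp.equiv 2 (Fin n → ℝ)).symm
                (fun r => (Real.sqrt (d j))⁻¹ * (M * U) r j) : Fin n → ℝ) i := by
          rw [hbj]
          simp only [hv'def, dif_pos h1, h2]
        simpa [hCdef, WithLp.equiv_symm_apply, PiLp.toLp_apply] using happ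
      rw [hCij]
      have h0 : 0 < d j := lt_of_le_of_ne (hdnn _) (Ne.symm hdj)
      have hs : Real.sqrt (d j) ≠ 0 := by positivity
      field_simp
  have hMU_eq : M * U = C * diagonal (fun j => Real.sqrt (d j)) := by
    ext i j
    rw [mul_diagonal, hkey i j, mul_comm]
  refine ⟨C * Uᵀ, ?_, ?_⟩
  · rw [transpose_mul, transpose_transpose]
    simp only [← Matrix.mul_assoc]
    rw [Matrix.mul_assoc U Cᵀ C, hCC, Matrix.mul_one, hUUt]
  · rw [hsq]
    have h3 : C * Uᵀ * (U * diagonal (fun i => Real.sqrt (d i)) * Uᵀ)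
        = C * diagonal (fun i => Real.sqrt (d i)) * Uᵀ := by
      simp only [← Matrix.mul_assoc]
      rw [Matrix.mul_assoc C Uᵀ U, hUtU, Matrix.mul_one]
    rw [h3, ← hMU_eq, Matrix.mul_assoc, hUUt, Matrix.mul_one]


lemma trace_ineq {n k : ℕ} (hk : k ≤ n) (M Z : Matrix (Fin n) (Fin k) ℝ)
    (hZ : Zᵀ * Z = 1) : (Zᵀ * M).trace ≤ (msqrt (Mᵀ * M)).trace := by
  obtain ⟨W, hW, hM⟩ := polar hk M
  set S : Matrix (Fin k) (Fin k) ℝ := msqrt (Mᵀ * M) with hSdef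
  have hS : S.PosSemidef := msqrt_psd (psd_tmul M)
  set T : Matrix (Fin k) (Fin k) ℝ := msqrt S with hTdef
  have hT : T.PosSemidef := msqrt_psd hS
  have hTT : T * T = S := msqrt_mul_self hS
  have hTt : Tᵀ = T := transpose_eq_self_of_psd hT
  have hnorm : ∀ (A : Matrix (Fin n) (Fin k) ℝ), Aᵀ * A = 1 →
      ∀ j, ∑ i, (A * T) i j * (A * T) i j = S j j := by
    intro A hA j
    have h1 : (A * T)ᵀ * (A * T) = S := by
      rw [transpose_mul, hTt, Matrix.mul_assoc T Aᵀ, ← Matrix.mul_assoc Aᵀ A T, hA,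
        Matrix.one_mul, hTT]
    have h2 := congrFun (congrFun h1 j) j
    rw [← h2, mul_apply]
    simp [transpose_apply]
  have e1 : (Zᵀ * M).trace = ((Z * T)ᵀ * (W * T)).trace := by
    rw [hM]
    have h2 : Zᵀ * (W * S) = (Zᵀ * W * T) * T := by
      rw [← hTT]; simp only [← Matrix.mul_assoc]
    rw [h2, Matrix.trace_mul_comm]
    congr 1
    rw [transpose_mul, hTt]
    simp only [← Matrix.mul_assoc]
  rw [e1]
  have e2 : ((Z * T)ᵀ * (W * T)).trace = ∑ j, ∑ i, (Z * T) i j * (W * T) i j := by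
    simp [Matrix.trace, Matrix.diag, mul_apply, transpose_apply]
    refine Finset.sum_congr rfl fun x _ => Finset.sum_congr rfl fun y _ => ?_
    congr 1
    exact Finset.sum_congr rfl fun z _ => mul_comm _ _
  rw [e2]
  have e3 : (S : Matrix (Fin k) (Fin k) ℝ).trace = ∑ j, S j j := by
    simp [Matrix.trace, Matrix.diag]
  rw [e3]
  apply Finset.sum_le_sum
  intro j _
  have hSjj : 0 ≤ S j j := by
    rw [← hnorm Z hZ j]
    exact Finset.sum_nonneg fun i _ => mul_self_nonneg _
  calc ∑ i, (Z * T) i j * (W * T) i j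
      ≤ Real.sqrt (∑ i, ((Z * T) i j) ^ 2) * Real.sqrt (∑ i, ((W * T) i j) ^ 2) :=
        Real.sum_mul_le_sqrt_mul_sqrt _ _ _
    _ = Real.sqrt (S j j) * Real.sqrt (S j j) := by
        have hz := hnorm Z hZ j
        have hw := hnorm W hW j
        simp only [sq]
        rw [hz, hw]
    _ = S j j := Real.mul_self_sqrt hSjj

open scoped MatrixOrder in
lemma trace_msqrt_symm {p k : ℕ} (hk : k ≤ p) (N : Matrix (Fin p) (Fin k) ℝ) :
    (msqrt (N * Nᵀ)).trace = (msqrt (Nᵀ * N)).trace := by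
  obtain ⟨W, hW, hN⟩ := polar hk N
  set S : Matrix (Fin k) (Fin k) ℝ := msqrt (Nᵀ * N) with hSdef
  have hS : S.PosSemidef := msqrt_psd (psd_tmul N)
  have hSt : Sᵀ = S := transpose_eq_self_of_psd hS
  set T : Matrix (Fin k) (Fin k) ℝ := msqrt S with hTdef
  have hT : T.PosSemidef := msqrt_psd hS
  have hTT : T * T = S := msqrt_mul_self hS
  have hTt : Tᵀ = T := transpose_eq_self_of_psd hT
  have hWSW_psd : (W * S * Wᵀ).PosSemidef := by
    have h : W * S * Wᵀ = (W * T) * (W * T)ᵀ := by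
      rw [transpose_mul, hTt, ← hTT]
      simp only [← Matrix.mul_assoc]
    rw [h]
    exact psd_mult (W * T)
  have hmid : Wᵀ * (W * (S * Wᵀ)) = S * Wᵀ := by
    rw [← Matrix.mul_assoc, hW, Matrix.one_mul]
  have hsq2 : (W * S * Wᵀ) * (W * S * Wᵀ) = N * Nᵀ := by
    calc (W * S * Wᵀ) * (W * S * Wᵀ) = W * (S * (Wᵀ * (W * (S * Wᵀ)))) := by
          simp only [Matrix.mul_assoc]
      _ = W * (S * (S * Wᵀ)) := by rw [hmid]
      _ = N * Nᵀ := by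
          rw [hN, transpose_mul, hSt]
          simp only [Matrix.mul_assoc]
  have hNNt : (N * Nᵀ).PosSemidef := psd_mult N
  have hkey : msqrt (N * Nᵀ) = W * S * Wᵀ := by
    rw [msqrt_of_psd hNNt]
    exact CFC.sqrt_unique hsq2 (Matrix.nonneg_iff_posSemidef.mpr hWSW_psd)
  rw [hkey, Matrix.trace_mul_cycle, hW, Matrix.one_mul]

lemma frob_eq_trace {n p : ℕ} (A : Matrix (Fin n) (Fin p) ℝ) :
    frobSq A = (Aᵀ * A).trace := by
  rw [frobSq]
  rw [Finset.sum_comm]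
  simp [Matrix.trace, Matrix.diag, mul_apply, transpose_apply, sq]

lemma frob_expand {N P K : ℕ} (X : Matrix (Fin N) (Fin P) ℝ)
    (Z : Matrix (Fin N) (Fin K) ℝ) (L : Matrix (Fin P) (Fin K) ℝ) (hZ : Zᵀ * Z = 1) :
    frobSq (X - Z * Lᵀ) = (Xᵀ * X).trace + (L * Lᵀ).trace - 2 * (Zᵀ * (X * L)).trace := by
  have h4 : (Z * Lᵀ)ᵀ * (Z * Lᵀ) = L * Lᵀ := by
    rw [transpose_mul, transpose_transpose, Matrix.mul_assoc, ← Matrix.mul_assoc Zᵀ, hZ,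
      Matrix.one_mul]
  have h3 : ((Z * Lᵀ)ᵀ * X).trace = (Zᵀ * (X * L)).trace := by
    rw [transpose_mul, transpose_transpose, Matrix.mul_assoc, Matrix.trace_mul_comm,
      Matrix.mul_assoc]
  have h2 : (Xᵀ * (Z * Lᵀ)).trace = (Zᵀ * (X * L)).trace := by
    have ht : (Xᵀ * (Z * Lᵀ))ᵀ = (Z * Lᵀ)ᵀ * X := by
      rw [transpose_mul, transpose_transpose]
    rw [← Matrix.trace_transpose (Xᵀ * (Z * Lᵀ)), ht, h3]
  rw [frob_eq_trace, transpose_sub, Matrix.sub_mul, Matrix.mul_sub, Matrix.mul_sub,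
    Matrix.trace_sub, Matrix.trace_sub, Matrix.trace_sub, h4, h2, h3]
  ring

lemma BW_eq {N P K : ℕ} (hKP : K ≤ P) (X : Matrix (Fin N) (Fin P) ℝ)
    (L : Matrix (Fin P) (Fin K) ℝ) :
    BWsq (Xᵀ * X) (L * Lᵀ) = (Xᵀ * X).trace + (L * Lᵀ).trace
      - 2 * (msqrt ((X * L)ᵀ * (X * L))).trace := by
  have hA : (Xᵀ * X).PosSemidef := psd_tmul X
  set R : Matrix (Fin P) (Fin P) ℝ := msqrt (Xᵀ * X) with hRdef
  have hRpsd : R.PosSemidef := msqrt_psd hA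
  have hRt : Rᵀ = R := transpose_eq_self_of_psd hRpsd
  have hRR : R * R = Xᵀ * X := msqrt_mul_self hA
  have hmid : R * (L * Lᵀ) * R = (R * L) * (R * L)ᵀ := by
    rw [transpose_mul, hRt]
    simp only [← Matrix.mul_assoc]
  have harg : (R * L)ᵀ * (R * L) = (X * L)ᵀ * (X * L) := by
    rw [transpose_mul, hRt, transpose_mul]
    calc Lᵀ * R * (R * L) = Lᵀ * (R * R) * L := by simp only [Matrix.mul_assoc]
      _ = Lᵀ * Xᵀ * (X * L) := by rw [hRR]; simp only [Matrix.mul_assoc]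
  have htr : (msqrt ((R * L) * (R * L)ᵀ)).trace = (msqrt ((X * L)ᵀ * (X * L))).trace := by
    rw [trace_msqrt_symm hKP (R * L), harg]
  rw [BWsq, ← hRdef, hmid, htr]
  ring

/-- If `(Ẑ, L̂)` minimizes the penalized PCA criterion, then `L̂` minimizes the
penalized covariance decomposition criterion. -/
theorem stmt8 {N P K : ℕ} (hKN : K ≤ N) (hKP : K ≤ P)
    (X : Matrix (Fin N) (Fin P) ℝ)
    (pen : Fin K → (Fin P → ℝ) → ℝ)
    (Zhat : Matrix (Fin N) (Fin K) ℝ) (Lhat : Matrix (Fin P) (Fin K) ℝ)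
    (hZhat : Zhat.transpose * Zhat = 1)
    (hmin : ∀ (Z : Matrix (Fin N) (Fin K) ℝ) (L : Matrix (Fin P) (Fin K) ℝ),
      Z.transpose * Z = 1 →
      (1/2) * frobSq (X - Zhat * Lhat.transpose) + ∑ k, pen k (fun p => Lhat p k)
        ≤ (1/2) * frobSq (X - Z * L.transpose) + ∑ k, pen k (fun p => L p k)) :
    ∀ L : Matrix (Fin P) (Fin K) ℝ,
      (1/2) * BWsq (X.transpose * X) (Lhat * Lhat.transpose) + ∑ k, pen k (fun p => Lhat p k)
        ≤ (1/2) * BWsq (X.transpose * X) (L * L.transpose) + ∑ k, pen k (fun p => L p k) := by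
  intro L
  have e_hat : (1/2) * BWsq (Xᵀ * X) (Lhat * Lhatᵀ) ≤ (1/2) * frobSq (X - Zhat * Lhatᵀ) := by
    rw [BW_eq hKP X Lhat, frob_expand X Zhat Lhat hZhat]
    have h := trace_ineq hKN (X * Lhat) Zhat hZhat
    linarith
  obtain ⟨W, hWo, hXL⟩ := polar hKN (X * L)
  have e_L : (1/2) * frobSq (X - W * Lᵀ) = (1/2) * BWsq (Xᵀ * X) (L * Lᵀ) := by
    rw [BW_eq hKP X L, frob_expand X W L hWo]
    have h : Wᵀ * (X * L) = msqrt ((X * L)ᵀ * (X * L)) := by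
      nth_rewrite 1 [hXL]
      rw [← Matrix.mul_assoc, hWo, Matrix.one_mul]
    rw [h]
  have step := hmin W L hWo
  calc (1/2) * BWsq (Xᵀ * X) (Lhat * Lhatᵀ) + ∑ k, pen k (fun p => Lhat p k)
      ≤ (1/2) * frobSq (X - Zhat * Lhatᵀ) + ∑ k, pen k (fun p => Lhat p k) := by linarith
    _ ≤ (1/2) * frobSq (X - W * Lᵀ) + ∑ k, pen k (fun p => L p k) := step
    _ = (1/2) * BWsq (Xᵀ * X) (L * Lᵀ) + ∑ k, pen k (fun p => L p k) := by rw [e_L]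
end

section
/- Let X = U_X D_X V_X^T be the thin SVD of an N-by-P real matrix X with P < N, and let C = V_X D_X V_X^T. If L ∈ ℝ^{P×K} and Z̃ = Polar.U(C L), then Z := U_X V_X^T Z̃ satisfies Z^T Z = I_K and ||X - Z L^T||_F^2 = ||C - Z̃ L^T||_F^2. -/
open Matrix

lemma frobSq_eq_trace {n p : ℕ} (A : Matrix (Fin n) (Fin p) ℝ) :
    frobSq A = Matrix.trace (A.transpose * A) := by
  simp [frobSq, Matrix.trace, Matrix.mul_apply, Matrix.diag, sq]
  rw [Finset.sum_comm]

lemma frobSq_mul_left {n m p : ℕ} (W : Matrix (Fin n) (Fin m) ℝ)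
    (hW : W.transpose * W = 1) (A : Matrix (Fin m) (Fin p) ℝ) :
    frobSq (W * A) = frobSq A := by
  rw [frobSq_eq_trace, frobSq_eq_trace, Matrix.transpose_mul, Matrix.mul_assoc,
    ← Matrix.mul_assoc W.transpose, hW, Matrix.one_mul]

/-- With `X = U_X D_X V_Xᵀ` a thin SVD, `C = V_X D_X V_Xᵀ`, and `Z̃ = U' V'ᵀ` the polar
U factor of `C L` (given via an SVD `C L = U' diagonal d' V'ᵀ`), the matrix
`Z = U_X V_Xᵀ Z̃` has orthonormal columns and `‖X - Z Lᵀ‖_F² = ‖C - Z̃ Lᵀ‖_F²`. -/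
theorem stmt12 {N P K : ℕ} (hPN : P < N)
    (X : Matrix (Fin N) (Fin P) ℝ)
    (UX : Matrix (Fin N) (Fin P) ℝ) (VX : Matrix (Fin P) (Fin P) ℝ) (dX : Fin P → ℝ)
    (hUX : UX.transpose * UX = 1)
    (hVX : VX.transpose * VX = 1) (hVX' : VX * VX.transpose = 1)
    (hdX : ∀ i, 0 ≤ dX i)
    (hX : X = UX * Matrix.diagonal dX * VX.transpose)
    (C : Matrix (Fin P) (Fin P) ℝ) (hC : C = VX * Matrix.diagonal dX * VX.transpose)
    (L : Matrix (Fin P) (Fin K) ℝ)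
    (U' : Matrix (Fin P) (Fin K) ℝ) (V' : Matrix (Fin K) (Fin K) ℝ) (d' : Fin K → ℝ)
    (hU' : U'.transpose * U' = 1)
    (hV'1 : V'.transpose * V' = 1) (hV'2 : V' * V'.transpose = 1)
    (hd' : ∀ i, 0 ≤ d' i)
    (hSVD : C * L = U' * Matrix.diagonal d' * V'.transpose) :
    ((UX * VX.transpose * (U' * V'.transpose)).transpose
        * (UX * VX.transpose * (U' * V'.transpose)) = 1) ∧
    frobSq (X - (UX * VX.transpose * (U' * V'.transpose)) * L.transpose)
      = frobSq (C - (U' * V'.transpose) * L.transpose) := by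
  set W := UX * VX.transpose with hWdef
  have hWW : W.transpose * W = 1 := by
    rw [hWdef, Matrix.transpose_mul, Matrix.transpose_transpose]
    calc VX * UX.transpose * (UX * VX.transpose)
        = VX * (UX.transpose * UX) * VX.transpose := by
          simp only [Matrix.mul_assoc]
      _ = 1 := by rw [hUX, Matrix.mul_one, hVX']
  constructor
  · calc (W * (U' * V'.transpose)).transpose * (W * (U' * V'.transpose))
        = (U' * V'.transpose).transpose * (W.transpose * W) * (U' * V'.transpose) := by
          simp only [Matrix.transpose_mul, Matrix.mul_assoc]
      _ = (U' * V'.transpose).transpose * (U' * V'.transpose) := by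
          rw [hWW, Matrix.mul_one]
      _ = V' * (U'.transpose * U') * V'.transpose := by
          simp only [Matrix.transpose_mul, Matrix.transpose_transpose, Matrix.mul_assoc]
      _ = 1 := by rw [hU', Matrix.mul_one, hV'2]
  · have hXWC : X = W * C := by
      rw [hX, hC, hWdef]
      calc UX * Matrix.diagonal dX * VX.transpose
          = UX * (VX.transpose * VX) * Matrix.diagonal dX * VX.transpose := by
            rw [hVX, Matrix.mul_one]
        _ = UX * VX.transpose * (VX * Matrix.diagonal dX * VX.transpose) := by
            simp only [Matrix.mul_assoc]
    have : X - W * (U' * V'.transpose) * L.transpose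
        = W * (C - (U' * V'.transpose) * L.transpose) := by
      rw [Matrix.mul_sub, ← hXWC, Matrix.mul_assoc]
    rw [this, frobSq_mul_left W hWW]
end
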